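/- Let G = (V,E) be a graph, W ⊆ V a vertex set such that the induced subgraph on W is a clique and G \ W is disconnected into parts C_l and C_r. If G_l = G[C_l ∪ W] admits a proper coloring with k_l colors and G_r = G[C_r ∪ W] admits a proper coloring with k_r colors, then G admits a proper coloring with max(k_l, k_r) colors. -/

import Mathlib

open SimpleGraph

lemma exists_perm_comp_eq {α β : Type*} [Finite β] (f g : α → β)
    (hf : Function.Injective f) (hg : Function.Injective g) :
    ∃ σ : Equiv.Perm β, ∀ a, σ (g a) = f a := by
  classical
  cases nonempty_fintype β
  let e : (Set.range g : Set β) ≃ (Set.range f : Set β) :=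
    (Equiv.ofInjective g hg).symm.trans (Equiv.ofInjective f hf)
  have hcard : Fintype.card ((Set.range g : Set β)ᶜ : Set β)
      = Fintype.card ((Set.range f : Set β)ᶜ : Set β) := by
    rw [Fintype.card_compl_set, Fintype.card_compl_set, Fintype.card_congr e]
  obtain ⟨e'⟩ := Fintype.card_eq.mp hcard
  refine ⟨(Equiv.Set.sumCompl (Set.range g)).symm.trans
    ((e.sumCongr e').trans (Equiv.Set.sumCompl (Set.range f))), fun a => ?_⟩
  have h1 : (Equiv.Set.sumCompl (Set.range g)).symm (g a)
      = Sum.inl ⟨g a, ⟨a, rfl⟩⟩ := by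
    rw [Equiv.symm_apply_eq, Equiv.Set.sumCompl_apply_inl]
  simp only [Equiv.trans_apply, h1, Equiv.sumCongr_apply, Sum.map_inl,
    Equiv.Set.sumCompl_apply_inl]
  have : e ⟨g a, ⟨a, rfl⟩⟩ = ⟨f a, ⟨a, rfl⟩⟩ := by
    apply Subtype.ext
    show ((Equiv.ofInjective f hf) ((Equiv.ofInjective g hg).symm ⟨g a, ⟨a, rfl⟩⟩) : β) = f a
    have h2 : (⟨g a, ⟨a, rfl⟩⟩ : Set.range g) = Equiv.ofInjective g hg a := rfl
    rw [h2, Equiv.symm_apply_apply]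
    rfl
  rw [this]

/-- If `W` induces a clique, `Cl` and `Cr` partition the remaining vertices with no
edges between them, and `G[Cl ∪ W]` is `kl`-colorable while `G[Cr ∪ W]` is
`kr`-colorable, then `G` is `max kl kr`-colorable. -/
theorem colorable_of_clique_cut
    {V : Type*} (G : SimpleGraph V) (W Cl Cr : Set V)
    (hclique : G.IsClique W)
    (hpart : Cl ∪ Cr = Wᶜ)
    (hdisj : Disjoint Cl Cr)
    (hsep : ∀ a ∈ Cl, ∀ b ∈ Cr, ¬ G.Adj a b)
    (kl kr : ℕ)
    (hl : (G.induce (Cl ∪ W)).Colorable kl)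
    (hr : (G.induce (Cr ∪ W)).Colorable kr) :
    G.Colorable (max kl kr) := by
  classical
  set N := max kl kr
  obtain ⟨cl⟩ := (hl.mono (le_max_left kl kr) : (G.induce (Cl ∪ W)).Colorable N)
  obtain ⟨cr⟩ := (hr.mono (le_max_right kl kr) : (G.induce (Cr ∪ W)).Colorable N)
  -- injective colorings on W
  have hWl : ∀ w ∈ W, w ∈ Cl ∪ W := fun w hw => Or.inr hw
  have hWr : ∀ w ∈ W, w ∈ Cr ∪ W := fun w hw => Or.inr hw
  have hfinj : Function.Injective (fun w : W => cl ⟨w, Or.inr w.2⟩) := by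
    intro a b hab
    by_contra hne
    have hne' : (a : V) ≠ b := fun h => hne (Subtype.ext h)
    have hadj : G.Adj a b := hclique a.2 b.2 hne'
    exact cl.valid (by exact hadj) hab
  have hginj : Function.Injective (fun w : W => cr ⟨w, Or.inr w.2⟩) := by
    intro a b hab
    by_contra hne
    have hne' : (a : V) ≠ b := fun h => hne (Subtype.ext h)
    have hadj : G.Adj a b := hclique a.2 b.2 hne'
    exact cr.valid (by exact hadj) hab
  obtain ⟨σ, hσ⟩ := exists_perm_comp_eq _ _ hfinj hginj
  -- membership facts
  have hmem : ∀ v : V, v ∉ Cl ∪ W → v ∈ Cr ∪ W := by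
    intro v hv
    have hvW : v ∉ W := fun h => hv (Or.inr h)
    have hv2 : v ∈ Cl ∪ Cr := by rw [hpart]; exact hvW
    rcases hv2 with h | h
    · exact absurd (Or.inl h) hv
    · exact Or.inl h
  refine ⟨⟨fun v => if h : v ∈ Cl ∪ W then cl ⟨v, h⟩ else σ (cr ⟨v, hmem v h⟩), ?_⟩⟩
  intro a b hab heq
  try dsimp only at heq
  by_cases ha : a ∈ Cl ∪ W <;> by_cases hb : b ∈ Cl ∪ W
  · rw [dif_pos ha, dif_pos hb] at heq
    exact cl.valid (by exact hab) heq
  · -- a ∈ Cl ∪ W, b ∉, so b ∈ Cr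
    have hbCr : b ∈ Cr := by
      rcases hmem b hb with h | h
      · exact h
      · exact absurd (Or.inr h) hb
    have haW : a ∈ W := by
      rcases ha with h | h
      · exact absurd hab (hsep a h b hbCr)
      · exact h
    rw [dif_pos ha, dif_neg hb] at heq
    have : cl ⟨a, ha⟩ = σ (cr ⟨a, Or.inr haW⟩) := by
      have := hσ ⟨a, haW⟩
      simp only at this
      rw [this]
    rw [this] at heq
    have heq2 : cr ⟨a, Or.inr haW⟩ = cr ⟨b, hmem b hb⟩ := σ.injective heq
    exact cr.valid (by exact hab) heq2
  · have haCr : a ∈ Cr := by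
      rcases hmem a ha with h | h
      · exact h
      · exact absurd (Or.inr h) ha
    have hbW : b ∈ W := by
      rcases hb with h | h
      · exact absurd hab.symm (hsep b h a haCr)
      · exact h
    rw [dif_neg ha, dif_pos hb] at heq
    have : cl ⟨b, hb⟩ = σ (cr ⟨b, Or.inr hbW⟩) := by
      have := hσ ⟨b, hbW⟩
      simp only at this
      rw [this]
    rw [this] at heq
    have heq2 : cr ⟨a, hmem a ha⟩ = cr ⟨b, Or.inr hbW⟩ := σ.injective heq
    exact cr.valid (by exact hab) heq2
  · rw [dif_neg ha, dif_neg hb] at heq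
    exact cr.valid (by exact hab) (σ.injective heq)
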